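/- For all m ∈ ℕ and all E, V ∈ ℝ: tr(M_{[0,0]}(E,V)·(M_{[0]}(E,V)·M_{[0,0]}(E,V))^m) = E·S_m(E-V) - 2·S_{m-1}(E-V). -/
import Mathlib

lemma cheb_pow (S : ℤ → ℝ → ℝ)
    (hSm1 : ∀ x : ℝ, S (-1) x = 0)
    (hS0 : ∀ x : ℝ, S 0 x = 1)
    (hrec : ∀ (n : ℤ) (x : ℝ), S (n + 1) x = x * S n x - S (n - 1) x)
    (x : ℝ) (m : ℕ) :
    (!![x, -1; 1, 0] : Matrix (Fin 2) (Fin 2) ℝ) ^ m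
      = !![S m x, -(S ((m : ℤ) - 1) x); S ((m : ℤ) - 1) x, -(S ((m : ℤ) - 2) x)] := by
  have hSm2 : S (-2) x = -1 := by
    have := hrec (-1) x
    simp [hSm1, hS0] at this
    linarith [this]
  induction m with
  | zero =>
    simp [hSm1, hS0, hSm2]
    norm_num [hSm1, hS0, hSm2]
    ext i j; fin_cases i <;> fin_cases j <;> simp [hSm1, hS0, hSm2]
  | succ n ih =>
    have h1 : (((n+1 : ℕ)) : ℤ) = (n:ℤ)+1 := by push_cast; ring
    have e1 : S (((n+1:ℕ)):ℤ) x = x * S (n:ℤ) x - S ((n:ℤ)-1) x := by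
      rw [h1, hrec]
    have e2 : S ((((n+1:ℕ)):ℤ)-1) x = S (n:ℤ) x := by rw [h1]; norm_num
    have e3 : S ((((n+1:ℕ)):ℤ)-2) x = S ((n:ℤ)-1) x := by rw [h1]; congr 1; ring
    have e4 : S (n:ℤ) x = x * S ((n:ℤ)-1) x - S ((n:ℤ)-2) x := by
      have h := hrec ((n:ℤ)-1) x
      have : (n:ℤ)-1+1 = (n:ℤ) := by ring
      rw [this] at h
      have h2 : (n:ℤ)-1-1 = (n:ℤ)-2 := by ring
      rw [h2] at h
      exact h
    rw [pow_succ, ih]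
    ext i j
    fin_cases i <;> fin_cases j <;>
      simp [Matrix.mul_apply, Fin.sum_univ_succ, e1, e2, e3] <;>
      first
      | (rw [hrec]; ring1)
      | (congr 1; ring1)
      | (rw [e4]; ring1)

/-- For all `m ∈ ℕ` and all `E, V ∈ ℝ`:
`tr(M_{[0,0]}(E,V) · (M_{[0]}(E,V) · M_{[0,0]}(E,V))^m) = E·S_m(E-V) - 2·S_{m-1}(E-V)`,
with `M_{[0]} = [[1,-V],[0,1]]`, `M_{[0,0]} = [[E,-1],[1,0]]`, and `S : ℤ → ℝ → ℝ`
the family of dilated Chebyshev polynomials of the second kind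
(`S_{-1} = 0`, `S_0 = 1`, `S_{n+1}(x) = x S_n(x) - S_{n-1}(x)`). -/
theorem trace_zero_zero_one_m
    (S : ℤ → ℝ → ℝ)
    (hSm1 : ∀ x : ℝ, S (-1) x = 0)
    (hS0 : ∀ x : ℝ, S 0 x = 1)
    (hrec : ∀ (n : ℤ) (x : ℝ), S (n + 1) x = x * S n x - S (n - 1) x)
    (m : ℕ) (E V : ℝ) :
    Matrix.trace ((!![E, -1; 1, 0] : Matrix (Fin 2) (Fin 2) ℝ)
        * ((!![1, -V; 0, 1] : Matrix (Fin 2) (Fin 2) ℝ)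
            * (!![E, -1; 1, 0] : Matrix (Fin 2) (Fin 2) ℝ)) ^ m)
      = E * S (m : ℤ) (E - V) - 2 * S ((m : ℤ) - 1) (E - V) := by
  have hprod : (!![1, -V; 0, 1] : Matrix (Fin 2) (Fin 2) ℝ) * !![E, -1; 1, 0]
      = !![E - V, -1; 1, 0] := by
    ext i j; fin_cases i <;> fin_cases j <;>
      simp [Matrix.mul_apply, Fin.sum_univ_succ] <;> ring
  rw [hprod, cheb_pow S hSm1 hS0 hrec]
  simp [Matrix.trace_fin_two, Matrix.mul_apply, Fin.sum_univ_succ]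
  ring
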